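/- For coprime positive integers p, q and any integer n \geq p + q, there exists a Young diagram D with |D| = n and a box c \in D such that p \cdot (l(c) + 1) = q \cdot a(c). -/
import Mathlib


/-- A Young diagram: a finite down-closed subset of ℕ². -/
def IsYoung (D : Finset (ℕ × ℕ)) : Prop :=
  ∀ x y x' y', (x, y) ∈ D → x' ≤ x → y' ≤ y → (x', y') ∈ D

/-- Arm length of a box inside the diagram. -/
def arm (D : Finset (ℕ × ℕ)) (c : ℕ × ℕ) : ℕ :=
  (D.filter fun d => d.2 = c.2 ∧ c.1 < d.1).card

/-- Leg length of a box inside the diagram. -/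
def leg (D : Finset (ℕ × ℕ)) (c : ℕ × ℕ) : ℕ :=
  (D.filter fun d => d.1 = c.1 ∧ c.2 < d.2).card

/-- Arm length of a box in the complement of the diagram. -/
def coArm (D : Finset (ℕ × ℕ)) (c : ℕ × ℕ) : ℕ :=
  ((Finset.range c.1).filter fun x' => (x', c.2) ∉ D).card

/-- Leg length of a box in the complement of the diagram. -/
def coLeg (D : Finset (ℕ × ℕ)) (c : ℕ × ℕ) : ℕ :=
  ((Finset.range c.2).filter fun y' => (c.1, y') ∉ D).card

def ofH (k : ℕ) (h : ℕ → ℕ) : Finset (ℕ × ℕ) :=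
  (Finset.range k).biUnion fun x => {x} ×ˢ Finset.range (h x)

lemma mem_ofH {k : ℕ} {h : ℕ → ℕ} {a b : ℕ} :
    (a, b) ∈ ofH k h ↔ a < k ∧ b < h a := by
  simp [ofH, Finset.mem_biUnion, Finset.mem_product]

lemma ofH_isYoung (k : ℕ) (h : ℕ → ℕ) (hmono : ∀ x' x, x' ≤ x → h x ≤ h x') :
    IsYoung (ofH k h) := by
  intro x y x' y' hm hx hy
  rw [mem_ofH] at hm ⊢
  exact ⟨lt_of_le_of_lt hx hm.1, lt_of_le_of_lt hy (lt_of_lt_of_le hm.2 (hmono _ _ hx))⟩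

lemma ofH_card (k : ℕ) (h : ℕ → ℕ) : (ofH k h).card = ∑ x ∈ Finset.range k, h x := by
  rw [ofH, Finset.card_biUnion]
  · simp
  · intro a _ b _ hab
    simp only [Finset.disjoint_left]
    rintro ⟨u, v⟩ hu hv
    simp [Finset.mem_product] at hu hv
    aesop

lemma ofH_arm (k : ℕ) (h : ℕ → ℕ) (j : ℕ) (hpos : ∀ x, x < k → 0 < h x) :
    arm (ofH k h) (j, 0) = k - 1 - j := by
  rw [arm]
  have : ((ofH k h).filter fun d => d.2 = (j,0).2 ∧ (j,0).1 < d.1) =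
      (Finset.Ico (j+1) k).image fun x => (x, 0) := by
    ext ⟨a, b⟩
    simp only [Finset.mem_filter, Finset.mem_image, Finset.mem_Ico, mem_ofH, Prod.mk.injEq]
    constructor
    · rintro ⟨⟨ha, _⟩, hb, hj⟩
      exact ⟨a, ⟨hj, ha⟩, rfl, hb.symm⟩
    · rintro ⟨x, ⟨hx1, hx2⟩, rfl, rfl⟩
      exact ⟨⟨hx2, hpos _ hx2⟩, rfl, hx1⟩
  rw [this, Finset.card_image_of_injective _ (by intro a b hab; simpa using hab), Nat.card_Ico]
  omega

lemma ofH_leg (k : ℕ) (h : ℕ → ℕ) (j : ℕ) (hj : j < k) :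
    leg (ofH k h) (j, 0) = h j - 1 := by
  rw [leg]
  have : ((ofH k h).filter fun d => d.1 = (j,0).1 ∧ (j,0).2 < d.2) =
      (Finset.Ico 1 (h j)).image fun y => (j, y) := by
    ext ⟨a, b⟩
    simp only [Finset.mem_filter, Finset.mem_image, Finset.mem_Ico, mem_ofH, Prod.mk.injEq]
    constructor
    · rintro ⟨⟨_, hb⟩, rfl, hb2⟩
      exact ⟨b, ⟨hb2, hb⟩, rfl, rfl⟩
    · rintro ⟨y, ⟨hy1, hy2⟩, rfl, rfl⟩
      exact ⟨⟨hj, hy2⟩, rfl, hy1⟩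
  rw [this, Finset.card_image_of_injective _ (by intro a b hab; simpa using hab), Nat.card_Ico]

lemma sum_abh (a b k : ℕ) (hk : 2 ≤ k) :
    ∑ x ∈ Finset.range k, (if x = 0 then a else if x = 1 then b else 1) = a + b + (k - 2) := by
  induction k with
  | zero => omega
  | succ m ih =>
    rcases Nat.lt_or_ge m 2 with hm | hm
    · interval_cases m
      · omega
      · simp [Finset.sum_range_succ]
    · rw [Finset.sum_range_succ, ih hm]
      have : ¬ (m = 0) := by omega
      have : ¬ (m = 1) := by omega
      simp_all
      omega

theorem exists_diagram_with_slope_minus (p q n : ℕ) (hp : 0 < p) (hq : 0 < q)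
    (hpq : Nat.Coprime p q) (hn : p + q ≤ n) :
    ∃ D : Finset (ℕ × ℕ), IsYoung D ∧ D.card = n ∧
      ∃ c ∈ D, p * (leg D c + 1) = q * arm D c := by
  set s := n - (p + q) with hs
  have hns : n = p + q + s := by omega
  rcases Nat.lt_or_ge s q with hsq | hsq
  · -- small slack: heights q, 1+s, 1, 1, ..., 1 (k = p+1 columns), c = (0,0)
    set h : ℕ → ℕ := fun x => if x = 0 then q else if x = 1 then 1 + s else 1 with hh
    refine ⟨ofH (p+1) h, ofH_isYoung _ _ ?_, ?_, (0, 0), ?_, ?_⟩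
    · intro x' x hx
      simp only [hh]
      split_ifs <;> omega
    · rw [ofH_card, hh, sum_abh q (1+s) (p+1) (by omega)]
      omega
    · rw [mem_ofH]
      constructor
      · omega
      · simp [hh]; omega
    · rw [ofH_leg _ _ _ (by omega), ofH_arm _ _ _ (fun x hx => by simp only [hh]; split_ifs <;> omega)]
      have h0 : h 0 = q := by simp [hh]
      rw [h0]
      have : q - 1 + 1 = q := by omega
      rw [this]
      have : p + 1 - 1 - 0 = p := by omega
      rw [this, Nat.mul_comm]
  · -- large slack: heights s, q, 1, 1, ..., 1 (k = p+2 columns), c = (1,0)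
    set h : ℕ → ℕ := fun x => if x = 0 then s else if x = 1 then q else 1 with hh
    refine ⟨ofH (p+2) h, ofH_isYoung _ _ ?_, ?_, (1, 0), ?_, ?_⟩
    · intro x' x hx
      simp only [hh]
      split_ifs <;> omega
    · rw [ofH_card, hh, sum_abh s q (p+2) (by omega)]
      omega
    · rw [mem_ofH]
      constructor
      · omega
      · simp [hh]; omega
    · rw [ofH_leg _ _ _ (by omega), ofH_arm _ _ _ (fun x hx => by simp only [hh]; split_ifs <;> omega)]
      have h1 : h 1 = q := by simp [hh]
      rw [h1]
      have : q - 1 + 1 = q := by omega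
      rw [this]
      have : p + 2 - 1 - 1 = p := by omega
      rw [this, Nat.mul_comm]
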